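/- Let n > 2 be odd and M_n the circulant matrix with entries m_j = (1/√n)·e^{(2πi/n)·j²}. Then M_n^n is a scalar multiple of the identity matrix by a complex number of modulus 1, and for 0 < s < n, M_n^s is not a scalar multiple of the identity. -/

import Mathlib

open Complex Real Matrix

/-- The circulant (shift) matrix whose `(i,j)` entry is `a (j - i)`. -/
def circ {n : ℕ} (a : ZMod n → ℂ) : Matrix (ZMod n) (ZMod n) ℂ :=
  fun i j => a (j - i)

/-- The circulant Gauss matrix `M_n` with `m_j = (1/√n)·e^{(2πi/n)·j²}`. -/
noncomputable def gaussMatrix (n : ℕ) : Matrix (ZMod n) (ZMod n) ℂ :=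
  circ (fun j => (1 / Real.sqrt n : ℂ) *
    Complex.exp (2 * Real.pi * Complex.I * ((j.val : ℂ) ^ 2) / n))

namespace GaussAux

set_option linter.unusedSectionVars false
variable (n : ℕ) [NeZero n]

/-- The basic additive character. -/
noncomputable def e (x : ZMod n) : ℂ :=
  Complex.exp (2 * Real.pi * Complex.I * (x.val : ℂ) / n)

lemma e_zero : e n 0 = 1 := by
  simp [e]

lemma e_natCast (a : ℕ) : e n (a : ZMod n) = Complex.exp (2 * Real.pi * Complex.I * (a : ℂ) / n) := by
  have hn : (n : ℂ) ≠ 0 := Nat.cast_ne_zero.mpr (NeZero.ne n)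
  have hval : ((a : ZMod n)).val = a % n := ZMod.val_natCast n a
  have ha : (a : ℂ) = (a % n : ℕ) + (n : ℂ) * (a / n : ℕ) := by
    exact_mod_cast (congrArg (fun m : ℕ => (m : ℂ)) (Nat.mod_add_div a n)).symm
  rw [e, hval, ha]
  rw [show 2 * (Real.pi:ℂ) * Complex.I * ((↑(a % n) + (n:ℂ) * (a / n : ℕ))) / n
      = 2 * (Real.pi:ℂ) * Complex.I * (↑(a % n)) / n + (a / n : ℕ) * (2 * Real.pi * Complex.I) by
    field_simp]
  rw [Complex.exp_add, Complex.exp_nat_mul_two_pi_mul_I]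
  ring

lemma e_add (x y : ZMod n) : e n (x + y) = e n x * e n y := by
  have hx : ((x.val : ℕ) : ZMod n) = x := ZMod.natCast_rightInverse x
  have hy : ((y.val : ℕ) : ZMod n) = y := ZMod.natCast_rightInverse y
  have h : e n (x + y) = e n (((x.val + y.val : ℕ) : ZMod n)) := by
    rw [Nat.cast_add, hx, hy]
  rw [h, e_natCast, e, e]
  push_cast
  rw [← Complex.exp_add]
  ring_nf

lemma e_pow (x : ZMod n) (s : ℕ) : (e n x) ^ s = e n ((x.val * s : ℕ) : ZMod n) := by
  rw [e, ← Complex.exp_nat_mul, e_natCast]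
  push_cast
  ring_nf

lemma e_pow_n (x : ZMod n) : (e n x) ^ n = 1 := by
  have hn : (n : ℂ) ≠ 0 := Nat.cast_ne_zero.mpr (NeZero.ne n)
  rw [e, ← Complex.exp_nat_mul]
  rw [show (n : ℂ) * (2 * Real.pi * Complex.I * (x.val : ℂ) / n) = (x.val : ℕ) * (2 * Real.pi * Complex.I) by field_simp]
  exact Complex.exp_nat_mul_two_pi_mul_I _

lemma e_ne_zero (x : ZMod n) : e n x ≠ 0 := Complex.exp_ne_zero _

lemma e_eq_one_iff (x : ZMod n) : e n x = 1 ↔ x = 0 := by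
  constructor
  · intro h
    rw [e, Complex.exp_eq_one_iff] at h
    obtain ⟨k, hk⟩ := h
    have hn : (n : ℂ) ≠ 0 := Nat.cast_ne_zero.mpr (NeZero.ne n)
    have h2 : (2 * Real.pi * Complex.I : ℂ) ≠ 0 := by
      simp [Real.pi_ne_zero, Complex.I_ne_zero]
    have h3 : ((x.val : ℂ)) / n = (k : ℂ) := by
      have h4 : (2 * (Real.pi:ℂ) * Complex.I) * ((x.val : ℂ) / n) = (2 * (Real.pi:ℂ) * Complex.I) * k := by
        linear_combination hk
      exact mul_left_cancel₀ h2 h4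
    have hx : (x.val : ℂ) = (k : ℂ) * n := by
      rw [div_eq_iff hn] at h3
      linear_combination h3
    have hx' : (x.val : ℤ) = k * n := by exact_mod_cast hx
    have hdvd' : n ∣ x.val := Int.ofNat_dvd.mp ⟨k, by linarith⟩
    have hlt := ZMod.val_lt x
    have h0 : x.val = 0 := Nat.eq_zero_of_dvd_of_lt hdvd' hlt
    exact (ZMod.val_eq_zero x).mp h0
  · intro h; rw [h]; exact e_zero n

lemma e_neg (x : ZMod n) : e n (-x) = (e n x)⁻¹ := by
  have h : e n (-x) * e n x = 1 := by
    rw [← e_add, neg_add_cancel, e_zero]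
  exact eq_inv_of_mul_eq_one_left h

lemma e_conj (x : ZMod n) : (starRingEnd ℂ) (e n x) = e n (-x) := by
  rw [e_neg, e, ← Complex.exp_conj, ← Complex.exp_neg]
  congr 1
  simp [-ZMod.natCast_val, map_div₀, Complex.conj_I, map_ofNat]
  ring

lemma sum_e (m : ZMod n) : (∑ k : ZMod n, e n (m * k)) = if m = 0 then (n : ℂ) else 0 := by
  split_ifs with hm
  · subst hm; simp [e_zero]
  · have hshift : (∑ k : ZMod n, e n (m * k)) = ∑ k : ZMod n, e n (m * (k + 1)) :=
      (Fintype.sum_equiv (Equiv.addRight (1 : ZMod n)) _ _ (fun k => rfl)).symm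
    have key : (∑ k : ZMod n, e n (m * k)) = e n m * ∑ k : ZMod n, e n (m * k) := by
      have h1 : ∀ k : ZMod n, e n (m * (k + 1)) = e n m * e n (m * k) := fun k => by
        rw [mul_add, mul_one, e_add]; ring
      calc (∑ k : ZMod n, e n (m * k)) = ∑ k : ZMod n, e n (m * (k + 1)) := hshift
        _ = ∑ k : ZMod n, e n m * e n (m * k) := Finset.sum_congr rfl (fun k _ => h1 k)
        _ = e n m * ∑ k : ZMod n, e n (m * k) := (Finset.mul_sum _ _ _).symm
    have hm1 : e n m ≠ 1 := fun h => hm ((e_eq_one_iff n m).mp h)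
    have h0 : (1 - e n m) * (∑ k : ZMod n, e n (m * k)) = 0 := by linear_combination key
    rcases mul_eq_zero.mp h0 with h | h
    · exact absurd (by linear_combination -h) hm1
    · exact h

/-- The Gauss sum. -/
noncomputable def G : ℂ := ∑ j : ZMod n, e n (j * j)

lemma two_mul_eq_zero_iff (hodd : Odd n) (t : ZMod n) : 2 * t = 0 ↔ t = 0 := by
  have h2 : IsUnit (2 : ZMod n) := by
    rw [show ((2 : ZMod n)) = ((2 : ℕ) : ZMod n) by push_cast; ring]
    exact (ZMod.isUnit_iff_coprime 2 n).mpr hodd.coprime_two_left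
  constructor
  · intro h
    obtain ⟨u, hu⟩ := h2
    calc t = u⁻¹ * (u * t) := by rw [← mul_assoc]; simp
    _ = 0 := by rw [hu, h, mul_zero]
  · intro h; rw [h, mul_zero]

lemma G_mul_conj (hodd : Odd n) : G n * (starRingEnd ℂ) (G n) = n := by
  rw [G, map_sum, Finset.sum_mul_sum]
  have step : ∀ k : ZMod n, ∑ j : ZMod n, e n (j * j) * (starRingEnd ℂ) (e n (k * k))
      = ∑ t : ZMod n, e n (t * t) * e n ((2 * t) * k) := by
    intro k
    have hre := Fintype.sum_equiv (Equiv.addRight k)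
      (fun t : ZMod n => e n ((t + k) * (t + k)) * (starRingEnd ℂ) (e n (k * k)))
      (fun j : ZMod n => e n (j * j) * (starRingEnd ℂ) (e n (k * k))) (fun t => rfl)
    rw [← hre]
    apply Finset.sum_congr rfl
    intro t _
    simp only [e_conj, ← e_add]
    congr 1
    ring
  rw [Finset.sum_comm]
  calc (∑ k : ZMod n, ∑ j : ZMod n, e n (j * j) * (starRingEnd ℂ) (e n (k * k)))
      = ∑ k : ZMod n, ∑ t : ZMod n, e n (t * t) * e n ((2 * t) * k) := by
        exact Finset.sum_congr rfl (fun k _ => step k)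
    _ = ∑ t : ZMod n, e n (t * t) * ∑ k : ZMod n, e n ((2 * t) * k) := by
        rw [Finset.sum_comm]
        exact Finset.sum_congr rfl (fun t _ => by rw [Finset.mul_sum])
    _ = (n : ℂ) := by
        rw [Fintype.sum_eq_single (0 : ZMod n)]
        · simp [sum_e, e_zero]
        · intro t ht
          rw [sum_e, if_neg, mul_zero]
          exact fun h => ht ((two_mul_eq_zero_iff n hodd t).mp h)

lemma e_sq (x : ZMod n) :
    Complex.exp (2 * Real.pi * Complex.I * ((x.val : ℂ) ^ 2) / n) = e n (x * x) := by
  have hx : ((x.val : ℕ) : ZMod n) = x := ZMod.natCast_rightInverse x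
  have h : ((x.val ^ 2 : ℕ) : ZMod n) = x * x := by
    push_cast [hx]; ring
  rw [← h, e_natCast]
  push_cast
  ring_nf

/-- The Fourier eigenvector. -/
noncomputable def v (k : ZMod n) : ZMod n → ℂ := fun j => e n (j * k)

/-- The eigenvalue. -/
noncomputable def lam (k : ZMod n) : ℂ :=
  (1 / ((Real.sqrt n : ℝ) : ℂ)) * ∑ j : ZMod n, e n (j * j + j * k)

lemma mulVec_v (k : ZMod n) :
    (gaussMatrix n).mulVec (v n k) = lam n k • v n k := by
  funext i
  have entry : ∀ j, gaussMatrix n i j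
      = (1 / ((Real.sqrt n : ℝ) : ℂ)) * e n ((j - i) * (j - i)) := fun j => by
    unfold gaussMatrix circ
    beta_reduce
    rw [e_sq]
  have h1 : (gaussMatrix n).mulVec (v n k) i
      = ∑ j : ZMod n, (1 / ((Real.sqrt n : ℝ) : ℂ)) * e n ((j - i) * (j - i)) * e n (j * k) := by
    simp only [Matrix.mulVec, dotProduct, entry, v]
  rw [h1]
  have hre := Fintype.sum_equiv (Equiv.addLeft i)
    (fun t : ZMod n => (1 / ((Real.sqrt n : ℝ) : ℂ)) * e n ((i + t - i) * (i + t - i)) * e n ((i + t) * k))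
    (fun j : ZMod n => (1 / ((Real.sqrt n : ℝ) : ℂ)) * e n ((j - i) * (j - i)) * e n (j * k))
    (fun t => rfl)
  rw [← hre]
  have expand : ∀ t : ZMod n,
      (1 / ((Real.sqrt n : ℝ) : ℂ)) * e n ((i + t - i) * (i + t - i)) * e n ((i + t) * k)
      = e n (i * k) * ((1 / ((Real.sqrt n : ℝ) : ℂ)) * e n (t * t + t * k)) := fun t => by
    rw [add_sub_cancel_left, mul_assoc, ← e_add,
      show t * t + (i + t) * k = i * k + (t * t + t * k) by ring, e_add]
    ring
  have hsv : (lam n k • v n k) i = lam n k * e n (i * k) := rfl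
  rw [Finset.sum_congr rfl (fun t _ => expand t), ← Finset.mul_sum, ← Finset.mul_sum, hsv, lam]
  ring

lemma pow_mulVec (s : ℕ) (k : ZMod n) :
    ((gaussMatrix n) ^ s).mulVec (v n k) = (lam n k ^ s) • v n k := by
  induction s with
  | zero => simp [Matrix.one_mulVec]
  | succ s ih =>
    rw [pow_succ, ← Matrix.mulVec_mulVec, mulVec_v, Matrix.mulVec_smul, ih, smul_smul, pow_succ]
    ring_nf

lemma sum_shift (b k : ZMod n) (hb : 2 * b = 1) :
    (∑ j : ZMod n, e n (j * j + j * k))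
      = e n (-(b * k * (b * k))) * ∑ j : ZMod n, e n (j * j) := by
  have hre := Fintype.sum_equiv (Equiv.subRight (b * k))
    (fun t : ZMod n => e n ((t - b * k) * (t - b * k) + (t - b * k) * k))
    (fun j : ZMod n => e n (j * j + j * k)) (fun t => rfl)
  rw [← hre]
  have expand : ∀ t : ZMod n,
      e n ((t - b * k) * (t - b * k) + (t - b * k) * k)
        = e n (-(b * k * (b * k))) * e n (t * t) := fun t => by
    rw [← e_add]
    congr 1
    linear_combination (b * k * k - t * k) * hb
  rw [Finset.sum_congr rfl (fun t _ => expand t), ← Finset.mul_sum]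

lemma eq_of_mulVec_v_eq_zero (A : Matrix (ZMod n) (ZMod n) ℂ)
    (h : ∀ k : ZMod n, A.mulVec (v n k) = 0) : A = 0 := by
  funext i j
  have key : (n : ℂ) * A i j = ∑ k : ZMod n, (A.mulVec (v n k) i) * e n (-(j * k)) := by
    have expand : ∀ k : ZMod n, (A.mulVec (v n k) i) * e n (-(j * k))
        = ∑ j' : ZMod n, A i j' * e n ((j' - j) * k) := fun k => by
      rw [Matrix.mulVec, dotProduct, Finset.sum_mul]
      apply Finset.sum_congr rfl
      intro j' _
      rw [show (j' - j) * k = j' * k + -(j * k) by ring, e_add, v]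
      ring
    rw [Finset.sum_congr rfl (fun k _ => expand k), Finset.sum_comm]
    have inner : ∀ j' : ZMod n, (∑ k : ZMod n, A i j' * e n ((j' - j) * k))
        = A i j' * (if j' - j = 0 then (n : ℂ) else 0) := fun j' => by
      rw [← Finset.mul_sum, sum_e]
    rw [Finset.sum_congr rfl (fun j' _ => inner j')]
    rw [Fintype.sum_eq_single j]
    · rw [sub_self, if_pos rfl]; ring
    · intro j' hj'
      rw [if_neg (fun hh => hj' (by linear_combination (norm := ring_nf) hh)), mul_zero]
  have hn : (n : ℂ) ≠ 0 := Nat.cast_ne_zero.mpr (NeZero.ne n)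
  have : (n : ℂ) * A i j = 0 := by
    rw [key]
    simp [h]
  have := mul_eq_zero.mp this
  simp only [Matrix.zero_apply]
  tauto

lemma two_isUnit (hodd : Odd n) : IsUnit (2 : ZMod n) := by
  rw [show ((2 : ZMod n)) = ((2 : ℕ) : ZMod n) by push_cast; ring]
  exact (ZMod.isUnit_iff_coprime 2 n).mpr hodd.coprime_two_left

lemma lam_eq (b k : ZMod n) (hb : 2 * b = 1) :
    lam n k = e n (-(b * k * (b * k))) * lam n 0 := by
  have h0 : (∑ j : ZMod n, e n (j * j + j * 0)) = ∑ j : ZMod n, e n (j * j) := by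
    simp
  rw [lam, lam, sum_shift n b k hb, h0]
  ring

lemma abs_lam_zero (hodd : Odd n) : ‖lam n 0‖ = 1 := by
  have hn : 0 < n := Nat.pos_of_ne_zero (NeZero.ne n)
  have hG : Complex.normSq (G n) = n := by
    have := G_mul_conj n hodd
    rw [Complex.mul_conj] at this
    exact_mod_cast this
  have habsG : ‖G n‖ = Real.sqrt n := by
    rw [Complex.norm_def, hG]
  have h0 : (∑ j : ZMod n, e n (j * j + j * 0)) = G n := by
    rw [G]; simp
  have hsq : (0:ℝ) < Real.sqrt n := Real.sqrt_pos.mpr (by exact_mod_cast hn)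
  rw [lam, h0, norm_mul, habsG, norm_div, norm_one]
  rw [Complex.norm_real, Real.norm_eq_abs, abs_of_pos hsq]
  field_simp

end GaussAux

theorem gaussMatrix_pow_scalar (n : ℕ) [NeZero n] (hodd : Odd n) (hn2 : 2 < n) :
    (∃ c : ℂ, ‖c‖ = 1 ∧
      (gaussMatrix n) ^ n = c • (1 : Matrix (ZMod n) (ZMod n) ℂ)) ∧
    (∀ s : ℕ, 0 < s → s < n →
      ¬ ∃ c : ℂ, (gaussMatrix n) ^ s = c • (1 : Matrix (ZMod n) (ZMod n) ℂ)) := by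
  classical
  set b := (2 : ZMod n)⁻¹ with hbdef
  have h2 : IsUnit (2 : ZMod n) := GaussAux.two_isUnit n hodd
  have hb : (2 : ZMod n) * b = 1 := ZMod.mul_inv_of_unit 2 h2
  have hbu : IsUnit b := IsUnit.of_mul_eq_one 2 (by rw [mul_comm]; exact hb)
  have hlam : ∀ k, GaussAux.lam n k = GaussAux.e n (-(b * k * (b * k))) * GaussAux.lam n 0 :=
    fun k => GaussAux.lam_eq n b k hb
  have hlam0 : GaussAux.lam n 0 ≠ 0 := by
    intro h
    have := GaussAux.abs_lam_zero n hodd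
    rw [h] at this
    simp at this
  constructor
  · refine ⟨GaussAux.lam n 0 ^ n, ?_, ?_⟩
    · rw [norm_pow, GaussAux.abs_lam_zero n hodd, one_pow]
    · have hz : ∀ k, ((gaussMatrix n) ^ n - (GaussAux.lam n 0 ^ n) • 1).mulVec (GaussAux.v n k) = 0 := by
        intro k
        rw [Matrix.sub_mulVec, GaussAux.pow_mulVec, Matrix.smul_mulVec, Matrix.one_mulVec]
        rw [hlam k, mul_pow, GaussAux.e_pow_n, one_mul, sub_self]
      exact sub_eq_zero.mp (GaussAux.eq_of_mulVec_v_eq_zero n _ hz)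
  · rintro s hs0 hsn ⟨c, hc⟩
    have hk : ∀ k, GaussAux.lam n k ^ s = c := by
      intro k
      have h1 := GaussAux.pow_mulVec n s k
      rw [hc, Matrix.smul_mulVec, Matrix.one_mulVec] at h1
      have hv0 : GaussAux.v n k 0 = 1 := by
        show GaussAux.e n (0 * k) = 1
        rw [zero_mul, GaussAux.e_zero]
      have h2' := congrFun h1 0
      simpa [hv0] using h2'.symm
    have hx : (GaussAux.e n (-(b * b))) ^ s = 1 := by
      have h1 := hk 1
      rw [hlam 1, mul_pow, mul_one] at h1
      have h0 := hk 0
      have hne : GaussAux.lam n 0 ^ s ≠ 0 := pow_ne_zero s hlam0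
      have hcomb : (GaussAux.e n (-(b * b))) ^ s * (GaussAux.lam n 0 ^ s)
          = 1 * (GaussAux.lam n 0 ^ s) := by
        rw [one_mul, h1, ← h0]
      exact mul_right_cancel₀ hne hcomb
    rw [GaussAux.e_pow, GaussAux.e_eq_one_iff] at hx
    have hdvd : n ∣ ((-(b * b) : ZMod n)).val * s :=
      (ZMod.natCast_eq_zero_iff _ n).mp hx
    have hcop : Nat.Coprime ((-(b * b) : ZMod n)).val n := by
      have hu : IsUnit (-(b * b) : ZMod n) := (hbu.mul hbu).neg
      obtain ⟨u, hu'⟩ := hu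
      have hcc := ZMod.val_coe_unit_coprime u
      rw [hu'] at hcc
      exact hcc
    have hns : n ∣ s := Nat.Coprime.dvd_of_dvd_mul_left hcop.symm hdvd
    exact absurd (Nat.le_of_dvd hs0 hns) (not_le.mpr hsn)
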